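/- Let G be a finite p-group and d ≥ 0 such that G^(d) γ_{2^d+1}(G) / γ_{2^d+1}(G) can be generated by two elements. Then G^(d+1) γ_{2^{d+1}+1}(G) / γ_{2^{d+1}+1}(G) is cyclic. -/

import Mathlib

open Subgroup
open scoped commutatorElement

private lemma three_subgroups' {G : Type*} [Group G] {A B C N : Subgroup G} [N.Normal]
    (h1 : ⁅⁅A, B⁆, C⁆ ≤ N) (h2 : ⁅⁅B, C⁆, A⁆ ≤ N) : ⁅⁅C, A⁆, B⁆ ≤ N := by
  let π := QuotientGroup.mk' N
  have key : ∀ X Y Z : Subgroup G, ⁅⁅X, Y⁆, Z⁆ ≤ N ↔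
      ⁅⁅Subgroup.map π X, Subgroup.map π Y⁆, Subgroup.map π Z⁆ = ⊥ := by
    intro X Y Z
    rw [← Subgroup.map_commutator, ← Subgroup.map_commutator, Subgroup.map_eq_bot_iff,
      QuotientGroup.ker_mk']
  rw [key] at h1 h2 ⊢
  exact Subgroup.commutator_commutator_eq_bot_of_rotate h1 h2

private lemma lcs_succ' {G : Type*} [Group G] (n : ℕ) :
    (⊤ : Subgroup G).lowerCentralSeries (n + 1) = ⁅(⊤ : Subgroup G).lowerCentralSeries n, (⊤ : Subgroup G)⁆ := rfl

private lemma lcs_comm {G : Type*} [Group G] : ∀ (j i : ℕ),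
    ⁅(⊤ : Subgroup G).lowerCentralSeries i, (⊤ : Subgroup G).lowerCentralSeries j⁆ ≤ (⊤ : Subgroup G).lowerCentralSeries (i + j + 1)
  | 0, i => by
    rw [Subgroup.lowerCentralSeries_zero, ← lcs_succ']
  | (j+1), i => by
    have h1 : ⁅⁅(⊤ : Subgroup G), (⊤ : Subgroup G).lowerCentralSeries i⁆, (⊤ : Subgroup G).lowerCentralSeries j⁆ ≤
        (⊤ : Subgroup G).lowerCentralSeries (i + (j + 1) + 1) := by
      rw [Subgroup.commutator_comm (⊤ : Subgroup G) ((⊤ : Subgroup G).lowerCentralSeries i), ← lcs_succ']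
      have h := lcs_comm (G := G) j (i + 1)
      have heq : i + 1 + j + 1 = i + (j + 1) + 1 := by omega
      rwa [heq] at h
    have h2 : ⁅⁅(⊤ : Subgroup G).lowerCentralSeries i, (⊤ : Subgroup G).lowerCentralSeries j⁆, (⊤ : Subgroup G)⁆ ≤
        (⊤ : Subgroup G).lowerCentralSeries (i + (j + 1) + 1) :=
      calc ⁅⁅(⊤ : Subgroup G).lowerCentralSeries i, (⊤ : Subgroup G).lowerCentralSeries j⁆, (⊤ : Subgroup G)⁆
          ≤ ⁅(⊤ : Subgroup G).lowerCentralSeries (i + j + 1), (⊤ : Subgroup G)⁆ :=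
            Subgroup.commutator_mono (lcs_comm j i) le_rfl
        _ = (⊤ : Subgroup G).lowerCentralSeries (i + (j + 1) + 1) := (lcs_succ' _).symm
    have h3 := three_subgroups' h1 h2
    rw [← lcs_succ', Subgroup.commutator_comm] at h3
    exact h3

private lemma derived_le_lcs {G : Type*} [Group G] (d : ℕ) :
    derivedSeries G d ≤ (⊤ : Subgroup G).lowerCentralSeries (2 ^ d - 1) := by
  induction d with
  | zero => simp [Subgroup.lowerCentralSeries_zero]
  | succ d ih =>
    have h1 : derivedSeries G (d + 1) ≤
        (⊤ : Subgroup G).lowerCentralSeries ((2 ^ d - 1) + (2 ^ d - 1) + 1) :=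
      (Subgroup.commutator_mono ih ih).trans (lcs_comm _ _)
    have h2 : (2 ^ d - 1) + (2 ^ d - 1) + 1 = 2 ^ (d + 1) - 1 := by
      have ha : 1 ≤ 2 ^ d := Nat.one_le_two_pow
      have hb : 2 ^ (d + 1) = 2 * 2 ^ d := by ring
      omega
    rwa [h2] at h1

private lemma isCyclic_zpowers' {G : Type*} [Group G] (g : G) :
    IsCyclic (Subgroup.zpowers g) := by
  refine ⟨⟨⟨g, Subgroup.mem_zpowers g⟩, fun x => ?_⟩⟩
  obtain ⟨k, hk⟩ := x.2
  exact ⟨k, Subtype.ext (by simpa using hk)⟩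

private lemma comm_aux {Q : Type*} [Group Q] {s m t m' : Q}
    (h1 : Commute m t) (h2 : Commute m m') (h3 : Commute m' s) :
    ⁅s * m, t * m'⁆ = ⁅s, t⁆ := by
  simp only [commutatorElement_def, mul_inv_rev]
  calc s * m * (t * m') * (m⁻¹ * s⁻¹) * (m'⁻¹ * t⁻¹)
      = s * (m * t) * (m' * m⁻¹) * s⁻¹ * m'⁻¹ * t⁻¹ := by group
    _ = s * (t * m) * (m⁻¹ * m') * s⁻¹ * m'⁻¹ * t⁻¹ := by rw [h1.eq, h2.inv_left.eq]
    _ = s * t * (m' * s⁻¹) * m'⁻¹ * t⁻¹ := by group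
    _ = s * t * (s⁻¹ * m') * m'⁻¹ * t⁻¹ := by rw [h3.inv_right.eq]
    _ = s * t * s⁻¹ * t⁻¹ := by group

private lemma closure_pair_commute {Q : Type*} [Group Q] {u v : Q} (h : Commute u v)
    {s t : Q} (hs : s ∈ Subgroup.closure {u, v}) (ht : t ∈ Subgroup.closure {u, v}) :
    Commute s t := by
  induction hs, ht using Subgroup.closure_induction₂ with
  | mem x y hx hy =>
    simp only [Set.mem_insert_iff, Set.mem_singleton_iff] at hx hy
    rcases hx with rfl | rfl <;> rcases hy with rfl | rfl
    · exact Commute.refl _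
    · exact h
    · exact h.symm
    · exact Commute.refl _
  | one_left x hx => exact Commute.one_left x
  | one_right x hx => exact Commute.one_right x
  | mul_left x y z _ _ _ hxz hyz => exact hxz.mul_left hyz
  | mul_right y z x _ _ _ hxy hxz => exact hxy.mul_right hxz
  | inv_left x y _ _ hxy => exact hxy.inv_left
  | inv_right x y _ _ hxy => exact hxy.inv_right

theorem cyclic_image_of_two_generated_image
    {p : ℕ} [Fact p.Prime] {G : Type*} [Group G] [Finite G]
    (hG : IsPGroup p G) (d : ℕ)
    (h2gen : ∃ x y : G ⧸ (⊤ : Subgroup G).lowerCentralSeries (2 ^ d),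
      Subgroup.closure {x, y} =
        Subgroup.map (QuotientGroup.mk' ((⊤ : Subgroup G).lowerCentralSeries (2 ^ d)))
          (derivedSeries G d)) :
    IsCyclic
      (Subgroup.map (QuotientGroup.mk' ((⊤ : Subgroup G).lowerCentralSeries (2 ^ (d + 1))))
        (derivedSeries G (d + 1))) := by
  set n := 2 ^ d with hn
  obtain ⟨x, y, hxy⟩ := h2gen
  have hn1 : 1 ≤ n := Nat.one_le_two_pow
  have h2n : 2 ^ (d + 1) = n + n := by rw [hn]; ring
  set K := (⊤ : Subgroup G).lowerCentralSeries (2 ^ (d + 1)) with hK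
  set π := QuotientGroup.mk' K with hπ
  -- get lifts of x and y inside the derived subgroup
  have hx : x ∈ Subgroup.map (QuotientGroup.mk' ((⊤ : Subgroup G).lowerCentralSeries n)) (derivedSeries G d) := by
    rw [← hxy]; exact Subgroup.subset_closure (by simp)
  have hy : y ∈ Subgroup.map (QuotientGroup.mk' ((⊤ : Subgroup G).lowerCentralSeries n)) (derivedSeries G d) := by
    rw [← hxy]; exact Subgroup.subset_closure (by simp)
  obtain ⟨a, ha, hax⟩ := hx
  obtain ⟨b, hb, hby⟩ := hy
  have haM : a ∈ (⊤ : Subgroup G).lowerCentralSeries (n - 1) := by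
    have := derived_le_lcs (G := G) d ha
    rwa [← hn] at this
  have hbM : b ∈ (⊤ : Subgroup G).lowerCentralSeries (n - 1) := by
    have := derived_le_lcs (G := G) d hb
    rwa [← hn] at this
  -- key commutation fact
  have hker : ∀ u ∈ (⊤ : Subgroup G).lowerCentralSeries (n - 1), ∀ v ∈ (⊤ : Subgroup G).lowerCentralSeries n,
      π ⁅u, v⁆ = 1 := by
    intro u hu v hv
    have h1 : ⁅u, v⁆ ∈ (⊤ : Subgroup G).lowerCentralSeries ((n - 1) + n + 1) :=
      lcs_comm n (n - 1) (Subgroup.commutator_mem_commutator hu hv)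
    have heq : (n - 1) + n + 1 = 2 ^ (d + 1) := by omega
    rw [heq] at h1
    rw [hπ, QuotientGroup.mk'_apply]
    exact (QuotientGroup.eq_one_iff _).mpr h1
  have hcomm : ∀ u ∈ Subgroup.map π ((⊤ : Subgroup G).lowerCentralSeries (n - 1)),
      ∀ v ∈ Subgroup.map π ((⊤ : Subgroup G).lowerCentralSeries n), Commute u v := by
    rintro _ ⟨u₀, hu₀, rfl⟩ _ ⟨v₀, hv₀, rfl⟩
    have h1 : π ⁅u₀, v₀⁆ = 1 := hker u₀ hu₀ v₀ hv₀
    rw [map_commutatorElement] at h1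
    exact commutatorElement_eq_one_iff_commute.mp h1
  set c : G ⧸ K := π ⁅a, b⁆ with hc
  -- c is central
  have hcentral : ∀ q : G ⧸ K, Commute c q := by
    intro q
    obtain ⟨g, rfl⟩ := QuotientGroup.mk'_surjective K q
    have hab : ⁅a, b⁆ ∈ (⊤ : Subgroup G).lowerCentralSeries ((n - 1) + (n - 1) + 1) :=
      lcs_comm (n - 1) (n - 1) (Subgroup.commutator_mem_commutator haM hbM)
    have h1 : ⁅⁅a, b⁆, g⁆ ∈ (⊤ : Subgroup G).lowerCentralSeries (2 ^ (d + 1)) := by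
      have h0 : ⁅⁅a, b⁆, g⁆ ∈ (⊤ : Subgroup G).lowerCentralSeries (((n - 1) + (n - 1) + 1) + 0 + 1) :=
        lcs_comm 0 _ (Subgroup.commutator_mem_commutator hab (Subgroup.mem_top g))
      exact Subgroup.lowerCentralSeries_antitone ⊤ (by omega) h0
    have h2 : π ⁅⁅a, b⁆, g⁆ = 1 := by
      rw [hπ, QuotientGroup.mk'_apply]
      exact (QuotientGroup.eq_one_iff _).mpr h1
    rw [map_commutatorElement] at h2
    exact commutatorElement_eq_one_iff_commute.mp h2
  haveI hNnormal : (Subgroup.map π ((⊤ : Subgroup G).lowerCentralSeries n)).Normal :=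
    Subgroup.Normal.map inferInstance π (QuotientGroup.mk'_surjective K)
  -- derived series is inside closure ⊔ N
  have hDle : derivedSeries G d ≤ Subgroup.closure {a, b} ⊔ (⊤ : Subgroup G).lowerCentralSeries n := by
    have hmapeq : Subgroup.map (QuotientGroup.mk' ((⊤ : Subgroup G).lowerCentralSeries n)) (derivedSeries G d) =
        Subgroup.map (QuotientGroup.mk' ((⊤ : Subgroup G).lowerCentralSeries n)) (Subgroup.closure {a, b}) := by
      rw [MonoidHom.map_closure, ← hxy]
      congr 1
      rw [Set.image_insert_eq, Set.image_singleton, hax, hby]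
    have h0 := Subgroup.le_comap_map (QuotientGroup.mk' ((⊤ : Subgroup G).lowerCentralSeries n))
      (derivedSeries G d)
    rw [hmapeq, Subgroup.comap_map_eq, QuotientGroup.ker_mk'] at h0
    exact h0
  haveI hzn : (Subgroup.zpowers c).Normal := by
    constructor
    intro z hz g
    obtain ⟨k, rfl⟩ := hz
    have hcg : Commute g (c ^ k) := ((hcentral g).symm.zpow_right k)
    rw [hcg.eq, mul_inv_cancel_right]
    exact Subgroup.zpow_mem _ (Subgroup.mem_zpowers c) k
  -- main containment
  have hmain : Subgroup.map π (derivedSeries G (d + 1)) ≤ Subgroup.zpowers c := by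
    rw [derivedSeries_succ, Subgroup.map_commutator]
    have hDle' : Subgroup.map π (derivedSeries G d) ≤
        Subgroup.closure {π a, π b} ⊔ Subgroup.map π ((⊤ : Subgroup G).lowerCentralSeries n) := by
      refine (Subgroup.map_mono hDle).trans ?_
      rw [Subgroup.map_sup, MonoidHom.map_closure, Set.image_insert_eq, Set.image_singleton]
    refine (Subgroup.commutator_mono hDle' hDle').trans ?_
    rw [Subgroup.commutator_le]
    intro g hg h hh
    have hg' : g ∈ ((Subgroup.closure {π a, π b} ⊔
        Subgroup.map π ((⊤ : Subgroup G).lowerCentralSeries n) : Subgroup (G ⧸ K)) : Set (G ⧸ K)) := hg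
    have hh' : h ∈ ((Subgroup.closure {π a, π b} ⊔
        Subgroup.map π ((⊤ : Subgroup G).lowerCentralSeries n) : Subgroup (G ⧸ K)) : Set (G ⧸ K)) := hh
    rw [Subgroup.mul_normal, Set.mem_mul] at hg' hh'
    obtain ⟨s, hs, m, hm, rfl⟩ := hg'
    obtain ⟨t, ht, m', hm', rfl⟩ := hh' 
    have hCle : Subgroup.closure {π a, π b} ≤ Subgroup.map π ((⊤ : Subgroup G).lowerCentralSeries (n - 1)) := by
      rw [Subgroup.closure_le]
      rintro z hz
      simp only [Set.mem_insert_iff, Set.mem_singleton_iff] at hz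
      rcases hz with rfl | rfl
      · exact ⟨a, haM, rfl⟩
      · exact ⟨b, hbM, rfl⟩
    have hNle : Subgroup.map π ((⊤ : Subgroup G).lowerCentralSeries n) ≤
        Subgroup.map π ((⊤ : Subgroup G).lowerCentralSeries (n - 1)) :=
      Subgroup.map_mono (Subgroup.lowerCentralSeries_antitone ⊤ (by omega))
    have h1 : Commute m t := (hcomm t (hCle ht) m hm).symm
    have h2 : Commute m m' := hcomm m (hNle hm) m' hm'
    have h3 : Commute m' s := (hcomm s (hCle hs) m' hm').symm
    rw [comm_aux h1 h2 h3]
    -- now show ⁅s, t⁆ ∈ zpowers c by passing to the quotient by zpowers c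
    set ρ := QuotientGroup.mk' (Subgroup.zpowers c) with hρ
    have hcab : Commute (ρ (π a)) (ρ (π b)) := by
      have h4 : ρ (π ⁅a, b⁆) = 1 := by
        rw [hρ, QuotientGroup.mk'_apply]
        exact (QuotientGroup.eq_one_iff _).mpr (Subgroup.mem_zpowers c)
      rw [map_commutatorElement, map_commutatorElement] at h4
      exact commutatorElement_eq_one_iff_commute.mp h4
    have hsmem : ρ s ∈ Subgroup.closure {ρ (π a), ρ (π b)} := by
      have : ρ s ∈ Subgroup.map ρ (Subgroup.closure {π a, π b}) := ⟨s, hs, rfl⟩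
      rwa [MonoidHom.map_closure, Set.image_insert_eq, Set.image_singleton] at this
    have htmem : ρ t ∈ Subgroup.closure {ρ (π a), ρ (π b)} := by
      have : ρ t ∈ Subgroup.map ρ (Subgroup.closure {π a, π b}) := ⟨t, ht, rfl⟩
      rwa [MonoidHom.map_closure, Set.image_insert_eq, Set.image_singleton] at this
    have hst : ρ ⁅s, t⁆ = 1 := by
      rw [map_commutatorElement]
      exact (closure_pair_commute hcab hsmem htmem).commutator_eq
    have : ⁅s, t⁆ ∈ MonoidHom.ker ρ := hst
    rwa [hρ, QuotientGroup.ker_mk'] at this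
  haveI := isCyclic_zpowers' c
  exact Subgroup.isCyclic_of_le hmain
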